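/- arXiv:1310.6308 — 5 statements merged into one kernel-verified Lean document; each statement's English description precedes it below -/
import Mathlib

section
/- Let a < b be real numbers, q : [a,b] → ℝ, and z ∈ ℂ. Let χ : [a,b] → ℂ be twice differentiable with χ''(x) = (q(x) − z)·χ(x). Let φ : ℂ × [a,b] → ℂ be jointly continuous and such that for every w ∈ ℂ the function x ↦ φ(w,x) is twice differentiable with ∂²_x φ(w,x) = (q(x) − w)·φ(w,x). Let Ω : ℂ → ℂ be differentiable at z and suppose that for every w ∈ ℂ: ∂_xφ(w,a)·χ(a) − φ(w,a)·χ'(a) = Ω(z) and ∂_xφ(w,b)·χ(b) − φ(w,b)·χ'(b) = Ω(w). Then ∫_a^b φ(z,x)·χ(x) dx = −Ω'(z). -/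
open MeasureTheory intervalIntegral Set Filter Topology

/-- If `φ(w,·)` is a jointly continuous family of solutions of `−f'' + q f = w f`,
`χ` is a solution for the parameter `z`, `Ω` is differentiable at `z`, and the boundary
Wronskians satisfy `W_a(φ(w),χ) = Ω(z)` and `W_b(φ(w),χ) = Ω(w)` for all `w`, then
`∫_a^b φ(z,x) χ(x) dx = −Ω'(z)`. -/
theorem integral_eq_neg_deriv_wronskian
    (a b : ℝ) (hab : a < b) (q : ℝ → ℝ) (z : ℂ)
    (χ χ' : ℝ → ℂ)
    (hχ : ∀ x ∈ Set.Icc a b, HasDerivAt χ (χ' x) x)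
    (hχ' : ∀ x ∈ Set.Icc a b, HasDerivAt χ' (((q x : ℂ) - z) * χ x) x)
    (φ φx : ℂ → ℝ → ℂ)
    (hφcont : ContinuousOn (fun p : ℂ × ℝ => φ p.1 p.2) (Set.univ ×ˢ Set.Icc a b))
    (hφ : ∀ w : ℂ, ∀ x ∈ Set.Icc a b, HasDerivAt (fun t => φ w t) (φx w x) x)
    (hφx : ∀ w : ℂ, ∀ x ∈ Set.Icc a b,
      HasDerivAt (fun t => φx w t) (((q x : ℂ) - w) * φ w x) x)
    (Ω : ℂ → ℂ) (hΩ : DifferentiableAt ℂ Ω z)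
    (hWa : ∀ w : ℂ, φx w a * χ a - φ w a * χ' a = Ω z)
    (hWb : ∀ w : ℂ, φx w b * χ b - φ w b * χ' b = Ω w) :
    ∫ x in a..b, φ z x * χ x = -(deriv Ω z) := by
  have huIcc : Set.uIcc a b = Set.Icc a b := Set.uIcc_of_le hab.le
  -- continuity facts
  have hχc : ContinuousOn χ (Set.Icc a b) :=
    fun x hx => (hχ x hx).continuousAt.continuousWithinAt
  have hχ'c : ContinuousOn χ' (Set.Icc a b) :=
    fun x hx => (hχ' x hx).continuousAt.continuousWithinAt
  have hφc : ∀ w : ℂ, ContinuousOn (fun t => φ w t) (Set.Icc a b) :=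
    fun w x hx => (hφ w x hx).continuousAt.continuousWithinAt
  set F : ℂ → ℂ := fun w => ∫ x in a..b, φ w x * χ x with hF
  -- integrability of the integrand
  have hint : ∀ w : ℂ, IntervalIntegrable (fun x => φ w x * χ x) volume a b := by
    intro w
    exact (((hφc w).mul hχc).mono (by rw [huIcc])).intervalIntegrable
  -- Lagrange identity + FTC : (z - w) * F w = Ω w - Ω z
  have key : ∀ w : ℂ, (z - w) * F w = Ω w - Ω z := by
    intro w
    have hG : ∀ x ∈ Set.uIcc a b,
        HasDerivAt (fun t => φx w t * χ t - φ w t * χ' t)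
          ((z - w) * (φ w x * χ x)) x := by
      intro x hx
      rw [huIcc] at hx
      have h1 := ((hφx w x hx).mul (hχ x hx)).sub ((hφ w x hx).mul (hχ' x hx))
      convert h1 using 1
      · rfl
      · rfl
      ring
    have hFTC := intervalIntegral.integral_eq_sub_of_hasDerivAt hG
      (((hint w).const_mul (z - w)))
    rw [intervalIntegral.integral_const_mul] at hFTC
    rw [hF, hFTC, hWa w, hWb w]
  -- continuity of F at z
  have hCb : ContinuousAt F z := by
    obtain ⟨C, hC⟩ := (isCompact_closedBall z 1 |>.prod isCompact_Icc).exists_bound_of_continuousOn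
      (hφcont.mono (Set.prod_mono (Set.subset_univ _) le_rfl))
    obtain ⟨D, hD⟩ := (isCompact_Icc (a := a) (b := b)).exists_bound_of_continuousOn hχc
    apply intervalIntegral.continuousAt_of_dominated_interval
      (bound := fun _ => max C 0 * max D 0)
    · filter_upwards with w
      exact (((hφc w).mul hχc).mono
        (by rw [Set.uIoc_of_le hab.le]; exact Set.Ioc_subset_Icc_self)).aestronglyMeasurable
        measurableSet_uIoc
    · filter_upwards [Metric.closedBall_mem_nhds z one_pos] with w hw
      filter_upwards with t ht
      rw [Set.uIoc_of_le hab.le] at ht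
      have ht' : t ∈ Set.Icc a b := Set.Ioc_subset_Icc_self ht
      rw [norm_mul]
      exact mul_le_mul ((hC (w, t) ⟨hw, ht'⟩).trans (le_max_left _ _))
        ((hD t ht').trans (le_max_left _ _)) (norm_nonneg _)
        (le_trans (norm_nonneg _) ((hC (w, t) ⟨hw, ht'⟩).trans (le_max_left _ _)))
    · exact intervalIntegrable_const
    · have hb0 : ∀ᵐ t : ℝ, t ≠ b := by
        rw [MeasureTheory.ae_iff]
        simp
      filter_upwards [hb0] with t htb ht
      rw [Set.uIoc_of_le hab.le] at ht
      have ht' : t ∈ Set.Ioo a b := ⟨ht.1, lt_of_le_of_ne ht.2 htb⟩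
      have hmem : Set.univ ×ˢ Set.Icc a b ∈ 𝓝 (z, t) :=
        prod_mem_nhds Filter.univ_mem (Icc_mem_nhds ht'.1 ht'.2)
      have hca : ContinuousAt (fun p : ℂ × ℝ => φ p.1 p.2) (z, t) :=
        (hφcont (z, t) ⟨trivial, Set.Ioo_subset_Icc_self ht'⟩).continuousAt hmem
      have hpm : ContinuousAt (fun w : ℂ => (w, t)) z :=
        continuousAt_id.prodMk continuousAt_const
      exact (ContinuousAt.comp (x := z) (f := fun w : ℂ => (w, t)) hca hpm).mul continuousAt_const
  -- Ω has derivative -F z at z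
  have hderiv : HasDerivAt Ω (-(F z)) z := by
    rw [hasDerivAt_iff_tendsto_slope]
    have heq : ∀ w ∈ ({z}ᶜ : Set ℂ), slope Ω z w = -(F w) := by
      intro w hw
      have hwz : w - z ≠ 0 := sub_ne_zero.mpr (by simpa using hw)
      rw [slope_def_field, div_eq_iff hwz, ← key w]
      ring
    have : Tendsto (fun w => -(F w)) (𝓝[≠] z) (𝓝 (-(F z))) :=
      (hCb.neg).continuousWithinAt.tendsto
    exact this.congr' (eventually_nhdsWithin_of_forall fun w hw => (heq w hw).symm)
  rw [hderiv.deriv, neg_neg]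
end

section
/- Let U ⊆ ℂ be open, w ∈ ℂ, and let A, B : U → ℂ be analytic (complex differentiable) on U. Suppose (w − z)·A(z) = 1 − B(z) for all z ∈ U. Then for every j ∈ ℕ and every z ∈ U: ((w − z)^{j+1} / j!)·A^{(j)}(z) = 1 − Σ_{k=0}^{j} ((w − z)^k / k!)·B^{(k)}(z), where A^{(j)} and B^{(k)} denote the j-th and k-th complex derivatives. -/
open scoped Nat

private lemma an_iter {f : ℂ → ℂ} {U : Set ℂ} (hU : IsOpen U)
    (hf : DifferentiableOn ℂ f U) : ∀ n : ℕ, AnalyticOnNhd ℂ (iteratedDeriv n f) U := by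
  intro n
  induction n with
  | zero => simpa [iteratedDeriv_zero] using hf.analyticOnNhd hU
  | succ n ih => rw [iteratedDeriv_succ]; exact ih.deriv

private lemma telescope_aux (n : ℕ) (x : ℂ) (g : ℕ → ℂ) :
    ∑ k ∈ Finset.range (n + 1),
      ((k : ℂ) * x ^ (k - 1) * (-1) / (k ! : ℂ) * g k + x ^ k / (k ! : ℂ) * g (k + 1))
    = x ^ n / (n ! : ℂ) * g (n + 1) := by
  induction n with
  | zero => simp
  | succ n ih =>
    rw [Finset.sum_range_succ, ih]
    have h1 : ((n + 1)! : ℂ) ≠ 0 := Nat.cast_ne_zero.2 (Nat.factorial_ne_zero _)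
    have h2 : ((n)! : ℂ) ≠ 0 := Nat.cast_ne_zero.2 (Nat.factorial_ne_zero _)
    have h3 : ((n : ℂ) + 1) ≠ 0 := Nat.cast_add_one_ne_zero n
    rw [Nat.factorial_succ]
    push_cast
    field_simp
    ring

private lemma alg_step (x p a a' b' S c f : ℂ) (hc : c ≠ 0) (hf : f ≠ 0)
    (E : c * p * (-1) / f * a + p * x / f * a' = -(p / f * b'))
    (ih : p * x / f * a = 1 - S) :
    p * x ^ 2 / (c * f) * a' = 1 - (S + p * x / (c * f) * b') := by
  have hcc : c * c⁻¹ = 1 := mul_inv_cancel₀ hc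
  rw [div_eq_mul_inv, div_eq_mul_inv, mul_inv] at *
  linear_combination (x * c⁻¹) * E + ih + (p * x * f⁻¹ * a) * hcc

/-- Inductive differentiation identity: if `(w − z) A(z) = 1 − B(z)` on an open set `U`
with `A`, `B` analytic on `U`, then for all `j` and `z ∈ U`,
`((w − z)^{j+1}/j!) A^{(j)}(z) = 1 − Σ_{k=0}^{j} ((w − z)^k/k!) B^{(k)}(z)`. -/
theorem iterated_deriv_identity
    (U : Set ℂ) (hU : IsOpen U) (w : ℂ) (A B : ℂ → ℂ)
    (hA : DifferentiableOn ℂ A U) (hB : DifferentiableOn ℂ B U)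
    (h : ∀ z ∈ U, (w - z) * A z = 1 - B z) :
    ∀ j : ℕ, ∀ z ∈ U,
      (w - z) ^ (j + 1) / (j ! : ℂ) * iteratedDeriv j A z =
        1 - ∑ k ∈ Finset.range (j + 1),
          (w - z) ^ k / (k ! : ℂ) * iteratedDeriv k B z := by
  intro j
  induction j with
  | zero =>
    intro z hz
    simpa using h z hz
  | succ j ih =>
    intro z hz
    -- derivative facts
    have hAd : ∀ n, HasDerivAt (iteratedDeriv n A) (iteratedDeriv (n + 1) A z) z := by
      intro n
      rw [iteratedDeriv_succ]
      exact ((an_iter hU hA n z hz).differentiableAt).hasDerivAt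
    have hBd : ∀ n, HasDerivAt (iteratedDeriv n B) (iteratedDeriv (n + 1) B z) z := by
      intro n
      rw [iteratedDeriv_succ]
      exact ((an_iter hU hB n z hz).differentiableAt).hasDerivAt
    have hsub : ∀ n : ℕ, HasDerivAt (fun y : ℂ => (w - y) ^ n)
        ((n : ℂ) * (w - z) ^ (n - 1) * (-1)) z := fun n =>
      (((hasDerivAt_id z).const_sub w).pow n)
    -- F has derivative D
    have hF : HasDerivAt (fun y => (w - y) ^ (j + 1) / (j ! : ℂ) * iteratedDeriv j A y)
        ((((j : ℂ) + 1) * (w - z) ^ j * (-1) / (j ! : ℂ)) * iteratedDeriv j A z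
          + (w - z) ^ (j + 1) / (j ! : ℂ) * iteratedDeriv (j + 1) A z) z := by
      have := ((hsub (j + 1)).div_const ((j ! : ℕ) : ℂ)).fun_mul (hAd j)
      simpa using this
    -- G has derivative D'
    have hG : HasDerivAt (fun y => 1 - ∑ k ∈ Finset.range (j + 1),
          (w - y) ^ k / (k ! : ℂ) * iteratedDeriv k B y)
        (-((w - z) ^ j / (j ! : ℂ) * iteratedDeriv (j + 1) B z)) z := by
      have hsum : HasDerivAt (fun y => ∑ k ∈ Finset.range (j + 1),
            (w - y) ^ k / (k ! : ℂ) * iteratedDeriv k B y)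
          (∑ k ∈ Finset.range (j + 1),
            (((k : ℂ) * (w - z) ^ (k - 1) * (-1) / (k ! : ℂ)) * iteratedDeriv k B z
              + (w - z) ^ k / (k ! : ℂ) * iteratedDeriv (k + 1) B z)) z := by
        apply HasDerivAt.fun_sum
        intro k _
        have := ((hsub k).div_const ((k ! : ℕ) : ℂ)).fun_mul (hBd k)
        simpa using this
      have := hsum.const_sub 1
      rwa [telescope_aux j (w - z) (fun k => iteratedDeriv k B z)] at this
    -- F = G eventually near z
    have hFG : HasDerivAt (fun y => (w - y) ^ (j + 1) / (j ! : ℂ) * iteratedDeriv j A y)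
        (-((w - z) ^ j / (j ! : ℂ) * iteratedDeriv (j + 1) B z)) z := by
      apply hG.congr_of_eventuallyEq
      filter_upwards [hU.mem_nhds hz] with y hy
      exact ih y hy
    have E := hF.unique hFG
    have h2 : ((j)! : ℂ) ≠ 0 := Nat.cast_ne_zero.2 (Nat.factorial_ne_zero _)
    have h3 : ((j : ℂ) + 1) ≠ 0 := Nat.cast_add_one_ne_zero j
    rw [Finset.sum_range_succ]
    have ihz := ih z hz
    have hfac : ((j + 1)! : ℂ) = ((j : ℂ) + 1) * (j ! : ℂ) := by
      rw [Nat.factorial_succ]; push_cast; ring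
    have E' : ((j : ℂ) + 1) * (w - z) ^ j * (-1) / (j ! : ℂ) * iteratedDeriv j A z
        + (w - z) ^ j * (w - z) / (j ! : ℂ) * iteratedDeriv (j + 1) A z
        = -((w - z) ^ j / (j ! : ℂ) * iteratedDeriv (j + 1) B z) := by
      linear_combination E
    have ihz' : (w - z) ^ j * (w - z) / (j ! : ℂ) * iteratedDeriv j A z
        = 1 - ∑ k ∈ Finset.range (j + 1),
            (w - z) ^ k / (k ! : ℂ) * iteratedDeriv k B z := by
      linear_combination ihz
    have main := alg_step (w - z) ((w - z) ^ j) (iteratedDeriv j A z)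
      (iteratedDeriv (j + 1) A z) (iteratedDeriv (j + 1) B z)
      (∑ k ∈ Finset.range (j + 1), (w - z) ^ k / (k ! : ℂ) * iteratedDeriv k B z)
      ((j : ℂ) + 1) ((j)! : ℂ) h3 h2 E' ihz'
    rw [hfac]
    linear_combination main
end

section
/- Let a < b be real numbers, q : [a,b] → ℝ, and w ∈ ℂ. Let φ : [a,b] → ℂ be twice differentiable with φ''(x) = (q(x) − w)·φ(x). Let ψ : ℂ × [a,b] → ℂ be such that: (1) ψ and ∂_xψ are jointly continuous on ℂ × [a,b]; (2) for each x ∈ [a,b], the functions z ↦ ψ(z,x) and z ↦ ∂_xψ(z,x) are entire; (3) for each z ∈ ℂ, x ↦ ψ(z,x) is twice differentiable with ∂²_xψ(z,x) = (q(x) − z)·ψ(z,x); (4) for all z ∈ ℂ, φ'(a)·ψ(z,a) − φ(a)·∂_xψ(z,a) = 1. Then for every j ∈ ℕ and every z ∈ ℂ: ((w − z)^{j+1}/j!)·∫_a^b φ(x)·ψ^{(j)}(z,x) dx = 1 − Σ_{k=0}^{j} ((w − z)^k/k!)·(φ'(b)·ψ^{(k)}(z,b) − φ(b)·∂_xψ^{(k)}(z,b)),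 where ψ^{(k)}(z,x) denotes the k-th complex derivative of z ↦ ψ(z,x). -/
open Metric Set

private lemma entire_iteratedDeriv {f : ℂ → ℂ} (hf : Differentiable ℂ f) :
    ∀ n, Differentiable ℂ (iteratedDeriv n f)
  | 0 => by simpa using hf
  | (n + 1) => by
    rw [iteratedDeriv_succ]
    exact Complex.analyticOnNhd_univ_iff_differentiable.mp
      ((Complex.analyticOnNhd_univ_iff_differentiable.mpr (entire_iteratedDeriv hf n)).deriv)

private lemma hasDerivAt_iteratedDeriv {f : ℂ → ℂ} (hf : Differentiable ℂ f) (n : ℕ) (z : ℂ) :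
    HasDerivAt (iteratedDeriv n f) (iteratedDeriv (n + 1) f z) z := by
  rw [iteratedDeriv_succ]
  exact (entire_iteratedDeriv hf n z).hasDerivAt

private lemma cauchy_bound {f : ℂ → ℂ} (hf : Differentiable ℂ f) {c : ℂ} {C : ℝ}
    (hC : ∀ ξ ∈ sphere c (1 : ℝ), ‖f ξ‖ ≤ C) (n : ℕ) :
    ‖iteratedDeriv n f c‖ ≤ n.factorial * C := by
  have h := hf.hasFPowerSeriesOnBall c (R := 1) one_pos
  have key := h.factorial_smul (1 : ℂ) n
  rw [iteratedDeriv_eq_iteratedFDeriv, ← key]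
  have h1 : ‖cauchyPowerSeries f c 1 n fun _ => (1 : ℂ)‖ ≤ C := by
    calc ‖cauchyPowerSeries f c 1 n fun _ => (1 : ℂ)‖
        ≤ ‖cauchyPowerSeries f c 1 n‖ * ∏ _i : Fin n, ‖(1 : ℂ)‖ :=
          (cauchyPowerSeries f c 1 n).le_opNorm _
      _ = ‖cauchyPowerSeries f c 1 n‖ := by simp
      _ ≤ ((2 * Real.pi)⁻¹ * ∫ θ : ℝ in (0)..2 * Real.pi, ‖f (circleMap c 1 θ)‖) * |(1:ℝ)|⁻¹ ^ n :=
          norm_cauchyPowerSeries_le f c 1 n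
      _ = (2 * Real.pi)⁻¹ * ∫ θ : ℝ in (0)..2 * Real.pi, ‖f (circleMap c 1 θ)‖ := by simp
      _ ≤ (2 * Real.pi)⁻¹ * ∫ θ : ℝ in (0)..2 * Real.pi, C := by
          apply mul_le_mul_of_nonneg_left _ (by positivity)
          · apply intervalIntegral.integral_mono_on Real.two_pi_pos.le
            · exact ((hf.continuous.norm.comp (continuous_circleMap c 1))).intervalIntegrable _ _
            · exact intervalIntegrable_const
            · intro θ _
              exact hC _ (by simpa using circleMap_mem_sphere c one_pos.le θ)
      _ = C := by
          rw [intervalIntegral.integral_const]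
          field_simp
          simp
  calc ‖n.factorial • cauchyPowerSeries f c 1 n fun _ => (1 : ℂ)‖
      = (n.factorial : ℝ) * ‖cauchyPowerSeries f c 1 n fun _ => (1 : ℂ)‖ := by
        rw [← Nat.cast_smul_eq_nsmul ℝ, norm_smul]
        simp
    _ ≤ (n.factorial : ℝ) * C := mul_le_mul_of_nonneg_left h1 (by positivity)

private lemma iteratedDeriv_sub_entire {f g : ℂ → ℂ} (hf : Differentiable ℂ f)
    (hg : Differentiable ℂ g) :
    ∀ n, iteratedDeriv n (fun z => f z - g z) = fun z => iteratedDeriv n f z - iteratedDeriv n g z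
  | 0 => by simp [iteratedDeriv_zero]
  | (n + 1) => by
    rw [iteratedDeriv_succ', iteratedDeriv_succ', iteratedDeriv_succ']
    have hd : (deriv fun z => f z - g z) = fun z => deriv f z - deriv g z := by
      funext z
      exact deriv_sub (hf z) (hg z)
    rw [hd]
    exact iteratedDeriv_sub_entire
      (Complex.analyticOnNhd_univ_iff_differentiable.mp (Complex.analyticOnNhd_univ_iff_differentiable.mpr hf).deriv)
      (Complex.analyticOnNhd_univ_iff_differentiable.mp (Complex.analyticOnNhd_univ_iff_differentiable.mpr hg).deriv)
      n

private lemma contOn_iteratedDeriv_param {a b : ℝ} (ψ : ℂ → ℝ → ℂ)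
    (hc : ContinuousOn (fun p : ℂ × ℝ => ψ p.1 p.2) (Set.univ ×ˢ Set.Icc a b))
    (he : ∀ x ∈ Set.Icc a b, Differentiable ℂ (fun z => ψ z x)) (j : ℕ) (z : ℂ) :
    ContinuousOn (fun x => iteratedDeriv j (fun ζ => ψ ζ x) z) (Set.Icc a b) := by
  intro x₀ hx₀
  rw [Metric.continuousWithinAt_iff]
  intro ε hε
  have hK : IsCompact (closedBall z 1 ×ˢ Set.Icc a b) :=
    (isCompact_closedBall z 1).prod isCompact_Icc
  have hu : UniformContinuousOn (fun p : ℂ × ℝ => ψ p.1 p.2) (closedBall z 1 ×ˢ Set.Icc a b) :=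
    hK.uniformContinuousOn_of_continuous
      (hc.mono (Set.prod_mono (Set.subset_univ _) subset_rfl))
  rw [Metric.uniformContinuousOn_iff] at hu
  have hε' : 0 < ε / (j.factorial + 1) := by positivity
  obtain ⟨δ, hδ, hcore⟩ := hu (ε / (j.factorial + 1)) hε'
  refine ⟨δ, hδ, fun {x} hx hxx₀ => ?_⟩
  have hbound : ∀ ξ ∈ sphere z (1 : ℝ), ‖ψ ξ x - ψ ξ x₀‖ ≤ ε / (j.factorial + 1) := by
    intro ξ hξ
    have hξ' : ξ ∈ closedBall z 1 := sphere_subset_closedBall hξ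
    have := hcore (ξ, x) ⟨hξ', hx⟩ (ξ, x₀) ⟨hξ', hx₀⟩ (by
      simp only [Prod.dist_eq, dist_self]
      simpa [max_lt_iff, hδ] using hxx₀)
    rw [dist_eq_norm] at this
    exact this.le
  have hdiff : Differentiable ℂ (fun ζ => ψ ζ x - ψ ζ x₀) := (he x hx).sub (he x₀ hx₀)
  have hkey : dist (iteratedDeriv j (fun ζ => ψ ζ x) z) (iteratedDeriv j (fun ζ => ψ ζ x₀) z)
      = ‖iteratedDeriv j (fun ζ => ψ ζ x - ψ ζ x₀) z‖ := by
    rw [dist_eq_norm, iteratedDeriv_sub_entire (he x hx) (he x₀ hx₀)]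
  rw [hkey]
  calc ‖iteratedDeriv j (fun ζ => ψ ζ x - ψ ζ x₀) z‖
      ≤ j.factorial * (ε / (j.factorial + 1)) := cauchy_bound hdiff hbound j
    _ < (j.factorial + 1) * (ε / (j.factorial + 1)) := by
        apply mul_lt_mul_of_pos_right _ hε'
        exact lt_add_one _
    _ = ε := by field_simp

private lemma step_aux (w z : ℂ) (j : ℕ) (I W : ℕ → ℂ → ℂ)
    (hI : ∀ k ζ, HasDerivAt (I k) (I (k + 1) ζ) ζ)
    (hW : ∀ k ζ, HasDerivAt (W k) (W (k + 1) ζ) ζ)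
    (ih : ∀ ζ, (w - ζ) ^ (j + 1) / (j.factorial : ℂ) * I j ζ =
      1 - ∑ k ∈ Finset.range (j + 1), (w - ζ) ^ k / (k.factorial : ℂ) * W k ζ) :
    (w - z) ^ (j + 2) / ((j + 1).factorial : ℂ) * I (j + 1) z =
      1 - ∑ k ∈ Finset.range (j + 2), (w - z) ^ k / (k.factorial : ℂ) * W k z := by
  have hfac : (j.factorial : ℂ) ≠ 0 := Nat.cast_ne_zero.mpr j.factorial_ne_zero
  have hj1 : ((j : ℂ) + 1) ≠ 0 := by
    have := Nat.cast_ne_zero (R := ℂ).mpr (Nat.succ_ne_zero j)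
    push_cast at this
    exact this
  have hL : HasDerivAt (fun ζ => (w - ζ) ^ (j + 1) / (j.factorial : ℂ) * I j ζ)
      ((↑(j + 1) * (w - z) ^ (j + 1 - 1) * (-1)) / (j.factorial : ℂ) * I j z +
        (w - z) ^ (j + 1) / (j.factorial : ℂ) * I (j + 1) z) z :=
    ((((hasDerivAt_id z).const_sub w).pow (j + 1)).div_const _).mul (hI j z)
  have hR : HasDerivAt
      (fun ζ => 1 - ∑ k ∈ Finset.range (j + 1), (w - ζ) ^ k / (k.factorial : ℂ) * W k ζ)
      (-(∑ k ∈ Finset.range (j + 1),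
        ((↑k * (w - z) ^ (k - 1) * (-1)) / (k.factorial : ℂ) * W k z +
          (w - z) ^ k / (k.factorial : ℂ) * W (k + 1) z))) z :=
    HasDerivAt.const_sub 1 (HasDerivAt.fun_sum fun k _ =>
      ((((hasDerivAt_id z).const_sub w).pow k).div_const _).mul (hW k z))
  have hfun : (fun ζ => (w - ζ) ^ (j + 1) / (j.factorial : ℂ) * I j ζ) =
      (fun ζ => 1 - ∑ k ∈ Finset.range (j + 1), (w - ζ) ^ k / (k.factorial : ℂ) * W k ζ) :=
    funext ih
  have hder := (hfun ▸ hL).unique hR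
  have htel : ∀ m : ℕ, ((m.factorial : ℂ) ≠ 0) → ((m : ℂ) + 1 ≠ 0) →
      (∑ k ∈ Finset.range (m + 1),
        ((↑k * (w - z) ^ (k - 1) * (-1)) / (k.factorial : ℂ) * W k z +
          (w - z) ^ k / (k.factorial : ℂ) * W (k + 1) z)) =
      (w - z) ^ m / (m.factorial : ℂ) * W (m + 1) z := by
    intro m
    induction m with
    | zero => intro _ _; norm_num [Finset.sum_range_one]
    | succ m ihm =>
      intro _ _
      have hfm : (m.factorial : ℂ) ≠ 0 := Nat.cast_ne_zero.mpr m.factorial_ne_zero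
      have hm1 : ((m : ℂ) + 1) ≠ 0 := by
        have := Nat.cast_ne_zero (R := ℂ).mpr (Nat.succ_ne_zero m)
        push_cast at this
        exact this
      rw [Finset.sum_range_succ, ihm hfm hm1]
      simp only [Nat.add_sub_cancel, Nat.factorial_succ, Nat.cast_mul]
      push_cast
      field_simp
      ring
  rw [htel j hfac hj1] at hder
  simp only [Nat.add_sub_cancel] at hder
  push_cast at hder
  have ihz := ih z
  rw [div_mul_eq_mul_div, div_eq_iff hfac] at ihz
  simp only [div_mul_eq_mul_div] at hder
  rw [← add_div, ← neg_div] at hder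
  have e2 : ((j : ℂ) + 1) * (w - z) ^ j * I j z =
      (w - z) ^ (j + 1) * I (j + 1) z + (w - z) ^ j * W (j + 1) z := by
    have h := congrArg (fun t : ℂ => t * (j.factorial : ℂ)) hder
    simp only [div_mul_cancel₀ _ hfac] at h
    linear_combination -h
  rw [Finset.sum_range_succ]
  simp only [Nat.factorial_succ, Nat.cast_mul]
  push_cast
  field_simp at ihz ⊢
  linear_combination (norm := ring1) ((j : ℂ) + 1) * ihz - (w - z) * e2


/-- Regular-interval version of Lemma 4.4 (formula eq:mf2): for a solution `φ` of
`−f'' + q f = w f` and an entire family `ψ(z,·)` of solutions of `−f'' + q f = z f`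
with `W_a(φ, ψ(z)) = 1`, one has
`((w − z)^{j+1}/j!) ∫_a^b φ ψ^{(j)}(z) = 1 − Σ_{k=0}^j ((w − z)^k/k!) W_b(φ, ψ^{(k)}(z))`,
where `W_x(u,v) := u'(x) v(x) − u(x) v'(x)` and `ψ^{(k)}` denotes the `k`-th derivative
with respect to the spectral parameter `z`. -/
theorem weyl_solution_integral_identity
    (a b : ℝ) (hab : a < b) (q : ℝ → ℝ) (w : ℂ)
    (φ φ' : ℝ → ℂ)
    (hφ : ∀ x ∈ Set.Icc a b, HasDerivAt φ (φ' x) x)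
    (hφ' : ∀ x ∈ Set.Icc a b, HasDerivAt φ' (((q x : ℂ) - w) * φ x) x)
    (ψ ψx : ℂ → ℝ → ℂ)
    (hψcont : ContinuousOn (fun p : ℂ × ℝ => ψ p.1 p.2) (Set.univ ×ˢ Set.Icc a b))
    (hψxcont : ContinuousOn (fun p : ℂ × ℝ => ψx p.1 p.2) (Set.univ ×ˢ Set.Icc a b))
    (hψent : ∀ x ∈ Set.Icc a b, Differentiable ℂ (fun z => ψ z x))
    (hψxent : ∀ x ∈ Set.Icc a b, Differentiable ℂ (fun z => ψx z x))
    (hψode : ∀ z : ℂ, ∀ x ∈ Set.Icc a b, HasDerivAt (fun t => ψ z t) (ψx z x) x)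
    (hψode' : ∀ z : ℂ, ∀ x ∈ Set.Icc a b,
      HasDerivAt (fun t => ψx z t) (((q x : ℂ) - z) * ψ z x) x)
    (hWa : ∀ z : ℂ, φ' a * ψ z a - φ a * ψx z a = 1) :
    ∀ j : ℕ, ∀ z : ℂ,
      (w - z) ^ (j + 1) / (j.factorial : ℂ) *
          ∫ x in a..b, φ x * iteratedDeriv j (fun ζ => ψ ζ x) z =
        1 - ∑ k ∈ Finset.range (j + 1),
          (w - z) ^ k / (k.factorial : ℂ) *
            (φ' b * iteratedDeriv k (fun ζ => ψ ζ b) z -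
              φ b * iteratedDeriv k (fun ζ => ψx ζ b) z) := by
  have hab' : a ≤ b := hab.le
  have hIcc : Set.uIcc a b = Set.Icc a b := Set.uIcc_of_le hab'
  have hIoc : Set.uIoc a b = Set.Ioc a b := Set.uIoc_of_le hab'
  have hamem : a ∈ Set.Icc a b := Set.left_mem_Icc.mpr hab'
  have hbmem : b ∈ Set.Icc a b := Set.right_mem_Icc.mpr hab'
  have hφc : ContinuousOn φ (Set.Icc a b) :=
    fun x hx => ((hφ x hx).continuousAt).continuousWithinAt
  have hΨc : ∀ (j : ℕ) (z : ℂ),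
      ContinuousOn (fun x => iteratedDeriv j (fun ζ => ψ ζ x) z) (Set.Icc a b) :=
    fun j z => contOn_iteratedDeriv_param ψ hψcont hψent j z
  have hint : ∀ (j : ℕ) (z : ℂ),
      IntervalIntegrable (fun x => φ x * iteratedDeriv j (fun ζ => ψ ζ x) z)
        MeasureTheory.volume a b := by
    intro j z
    apply ContinuousOn.intervalIntegrable
    rw [hIcc]
    exact hφc.mul (hΨc j z)
  have meas : ∀ (k : ℕ) (ζ : ℂ), MeasureTheory.AEStronglyMeasurable
      (fun x => φ x * iteratedDeriv k (fun ζ' => ψ ζ' x) ζ)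
      (MeasureTheory.volume.restrict (Set.uIoc a b)) := by
    intro k ζ
    refine ContinuousOn.aestronglyMeasurable ?_ measurableSet_uIoc
    refine (hφc.mul (hΨc k ζ)).mono ?_
    rw [hIoc]
    exact Set.Ioc_subset_Icc_self
  have hI : ∀ (j : ℕ) (z : ℂ),
      HasDerivAt (fun ζ => ∫ x in a..b, φ x * iteratedDeriv j (fun ζ' => ψ ζ' x) ζ)
        (∫ x in a..b, φ x * iteratedDeriv (j + 1) (fun ζ' => ψ ζ' x) z) z := by
    intro j z
    obtain ⟨Cφ, hCφ⟩ := isCompact_Icc.exists_bound_of_continuousOn hφc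
    obtain ⟨Cψ, hCψ⟩ :=
      ((isCompact_closedBall z 2).prod isCompact_Icc).exists_bound_of_continuousOn
        (hψcont.mono (Set.prod_mono (Set.subset_univ _) subset_rfl))
    have hCφ0 : 0 ≤ Cφ := le_trans (norm_nonneg _) (hCφ a hamem)
    refine (intervalIntegral.hasDerivAt_integral_of_dominated_loc_of_deriv_le
      (F := fun ζ x => φ x * iteratedDeriv j (fun ζ' => ψ ζ' x) ζ)
      (F' := fun ζ x => φ x * iteratedDeriv (j + 1) (fun ζ' => ψ ζ' x) ζ)
      (bound := fun _ => Cφ * (((j + 1).factorial : ℝ) * Cψ))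
      (Metric.ball_mem_nhds z one_pos)
      (Filter.Eventually.of_forall fun ζ => meas j ζ) (hint j z) (meas (j + 1) z)
      (MeasureTheory.ae_of_all _ fun x hx ζ hζ => ?_) intervalIntegrable_const
      (MeasureTheory.ae_of_all _ fun x hx ζ hζ => ?_)).2
    · have hx' : x ∈ Set.Icc a b := Set.Ioc_subset_Icc_self (hIoc ▸ hx)
      rw [norm_mul]
      refine mul_le_mul (hCφ x hx') ?_ (norm_nonneg _) hCφ0
      refine cauchy_bound (hψent x hx') (C := Cψ) (fun ξ hξ => hCψ (ξ, x) ⟨?_, hx'⟩) (j + 1)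
      have h1 : dist ξ ζ = 1 := mem_sphere.mp hξ
      have h2 : dist ζ z < 1 := mem_ball.mp hζ
      rw [mem_closedBall]
      calc dist ξ z ≤ dist ξ ζ + dist ζ z := dist_triangle _ _ _
        _ ≤ 2 := by rw [h1]; linarith
    · have hx' : x ∈ Set.Icc a b := Set.Ioc_subset_Icc_self (hIoc ▸ hx)
      exact (hasDerivAt_iteratedDeriv (hψent x hx') j ζ).const_mul (φ x)
  have hWd : ∀ (k : ℕ) (z : ℂ),
      HasDerivAt (fun ζ => φ' b * iteratedDeriv k (fun ζ' => ψ ζ' b) ζ -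
          φ b * iteratedDeriv k (fun ζ' => ψx ζ' b) ζ)
        (φ' b * iteratedDeriv (k + 1) (fun ζ' => ψ ζ' b) z -
          φ b * iteratedDeriv (k + 1) (fun ζ' => ψx ζ' b) z) z :=
    fun k z => ((hasDerivAt_iteratedDeriv (hψent b hbmem) k z).const_mul (φ' b)).sub
      ((hasDerivAt_iteratedDeriv (hψxent b hbmem) k z).const_mul (φ b))
  intro j
  induction j with
  | zero =>
    intro z
    simp only [zero_add, pow_one, Nat.factorial_zero, Nat.cast_one, div_one, Finset.range_one,
      Finset.sum_singleton, pow_zero, iteratedDeriv_zero, one_mul]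
    have hψzc : ContinuousOn (fun x : ℝ => ψ z x) (Set.Icc a b) := by
      have := hΨc 0 z
      simpa [iteratedDeriv_zero] using this
    have key : ∀ x ∈ Set.uIcc a b, HasDerivAt (fun t => φ' t * ψ z t - φ t * ψx z t)
        ((z - w) * (φ x * ψ z x)) x := by
      intro x hx
      rw [hIcc] at hx
      have h1 := (hφ' x hx).mul (hψode z x hx)
      have h2 := (hφ x hx).mul (hψode' z x hx)
      refine (h1.sub h2).congr_deriv ?_
      ring
    have hint0 : IntervalIntegrable (fun x => (z - w) * (φ x * ψ z x))
        MeasureTheory.volume a b := by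
      apply ContinuousOn.intervalIntegrable
      rw [hIcc]
      exact continuousOn_const.mul (hφc.mul hψzc)
    have ftc := intervalIntegral.integral_eq_sub_of_hasDerivAt key hint0
    rw [intervalIntegral.integral_const_mul, hWa z] at ftc
    linear_combination -ftc
  | succ j ih =>
    intro z
    exact step_aux w z j
      (fun k ζ => ∫ x in a..b, φ x * iteratedDeriv k (fun ζ' => ψ ζ' x) ζ)
      (fun k ζ => φ' b * iteratedDeriv k (fun ζ' => ψ ζ' b) ζ -
        φ b * iteratedDeriv k (fun ζ' => ψx ζ' b) ζ)
      hI hWd ih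
end

section
/- Let a < b be real numbers and q : [a,b] → ℝ. Let φ : ℂ × [a,b] → ℂ satisfy: (1) for each z ∈ ℂ, x ↦ φ(z,x) is twice differentiable with ∂²_xφ(z,x) = (q(x) − z)·φ(z,x); (2) φ(z̄, x) = conj(φ(z,x)) and ∂_xφ(z̄, x) = conj(∂_xφ(z,x)) for all z ∈ ℂ, x ∈ [a,b] (where z̄ is the complex conjugate of z); (3) the boundary values φ(z,a) and ∂_xφ(z,a) do not depend on z. Let c, s : [a,b] → ℝ be differentiable with c(b)s'(b) − c'(b)s(b) = 1, and define E(z) := (c(b)·∂_xφ(z,b) − c'(b)·φ(z,b)) + i·(s(b)·∂_xφ(z,b) − s'(b)·φ(z,b)). Then for all w, z ∈ ℂ with w̄ ≠ z: (E(z)·conj(E(w)) − E(w̄)·conj(E(z̄))) / (2i·(w̄ − z)) = ∫_a^b conj(φ(w,x))·φ(z,x) dx. -/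
open Complex

/-- Regular-interval reproducing-kernel identity for the de Branges function
`E(z) = W_b(c,φ(z)) + i W_b(s,φ(z))` (with `W_b(u,v) := u(b) v'(b) − u'(b) v(b)`):
for a family `φ(z,·)` of solutions of `−f'' + q f = z f` with conjugation symmetry
and `z`-independent initial data at `a`, one has
`(E(z) conj(E(w)) − E(w̄) conj(E(z̄))) / (2i (w̄ − z)) = ∫_a^b conj(φ(w,x)) φ(z,x) dx`. -/
theorem de_branges_kernel_identity
    (a b : ℝ) (hab : a < b) (q : ℝ → ℝ)
    (φ φx : ℂ → ℝ → ℂ)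
    (hφode : ∀ z : ℂ, ∀ x ∈ Set.Icc a b, HasDerivAt (fun t => φ z t) (φx z x) x)
    (hφode' : ∀ z : ℂ, ∀ x ∈ Set.Icc a b,
      HasDerivAt (fun t => φx z t) (((q x : ℂ) - z) * φ z x) x)
    (hconj : ∀ z : ℂ, ∀ x ∈ Set.Icc a b,
      φ (starRingEnd ℂ z) x = starRingEnd ℂ (φ z x) ∧
      φx (starRingEnd ℂ z) x = starRingEnd ℂ (φx z x))
    (hinit : ∀ z w : ℂ, φ z a = φ w a ∧ φx z a = φx w a)
    (c s : ℝ → ℝ)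
    (hc : ∀ x ∈ Set.Icc a b, DifferentiableAt ℝ c x)
    (hs : ∀ x ∈ Set.Icc a b, DifferentiableAt ℝ s x)
    (hcs : c b * deriv s b - deriv c b * s b = 1)
    (E : ℂ → ℂ)
    (hE : ∀ z : ℂ, E z = ((Complex.ofReal (c b)) * φx z b - (Complex.ofReal (deriv c b)) * φ z b) +
      Complex.I * ((Complex.ofReal (s b)) * φx z b - (Complex.ofReal (deriv s b)) * φ z b)) :
    ∀ w z : ℂ, starRingEnd ℂ w ≠ z →
      (E z * starRingEnd ℂ (E w) -
          E (starRingEnd ℂ w) * starRingEnd ℂ (E (starRingEnd ℂ z))) /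
        (2 * Complex.I * (starRingEnd ℂ w - z)) =
      ∫ x in a..b, starRingEnd ℂ (φ w x) * φ z x := by
  intro w z hwz
  have hb : b ∈ Set.Icc a b := ⟨hab.le, le_refl _⟩
  have ha : a ∈ Set.Icc a b := ⟨le_refl _, hab.le⟩
  have hsub : starRingEnd ℂ w - z ≠ 0 := sub_ne_zero.mpr hwz
  set u : ℝ → ℂ := fun x => φ (starRingEnd ℂ w) x * φx z x - φx (starRingEnd ℂ w) x * φ z x with hu
  have hderiv : ∀ x ∈ Set.uIcc a b,
      HasDerivAt u ((starRingEnd ℂ w - z) * (φ (starRingEnd ℂ w) x * φ z x)) x := by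
    intro x hx
    rw [Set.uIcc_of_le hab.le] at hx
    have h1 := hφode (starRingEnd ℂ w) x hx
    have h2 := hφode' (starRingEnd ℂ w) x hx
    have h3 := hφode z x hx
    have h4 := hφode' z x hx
    have := (h1.mul h4).sub (h2.mul h3)
    convert this using 1
    case e'_4 => rfl
    case e'_8 => rfl
    case e'_9 => ring
  have hcont : ContinuousOn
      (fun x => (starRingEnd ℂ w - z) * (φ (starRingEnd ℂ w) x * φ z x)) (Set.uIcc a b) := by
    rw [Set.uIcc_of_le hab.le]
    intro x hx
    exact (continuousAt_const.mul
      ((hφode _ x hx).continuousAt.mul (hφode z x hx).continuousAt)).continuousWithinAt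
  have key : ∫ x in a..b, (starRingEnd ℂ w - z) * (φ (starRingEnd ℂ w) x * φ z x)
      = u b - u a :=
    intervalIntegral.integral_eq_sub_of_hasDerivAt hderiv hcont.intervalIntegrable
  have hua : u a = 0 := by
    have h1 := (hinit (starRingEnd ℂ w) z).1
    have h2 := (hinit (starRingEnd ℂ w) z).2
    simp only [hu, h1, h2]
    ring
  rw [hua, sub_zero, intervalIntegral.integral_const_mul] at key
  have hint : ∫ x in a..b, starRingEnd ℂ (φ w x) * φ z x
      = ∫ x in a..b, φ (starRingEnd ℂ w) x * φ z x := by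
    apply intervalIntegral.integral_congr
    intro x hx
    rw [Set.uIcc_of_le hab.le] at hx
    simp only [(hconj w x hx).1]
  have hIeq : ∫ x in a..b, φ (starRingEnd ℂ w) x * φ z x = u b / (starRingEnd ℂ w - z) := by
    field_simp
    linear_combination key
  rw [hint, hIeq]
  have hqb : φ (starRingEnd ℂ w) b = starRingEnd ℂ (φ w b) := (hconj w b hb).1
  have hqb' : φx (starRingEnd ℂ w) b = starRingEnd ℂ (φx w b) := (hconj w b hb).2
  have hpb : φ (starRingEnd ℂ z) b = starRingEnd ℂ (φ z b) := (hconj z b hb).1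
  have hpb' : φx (starRingEnd ℂ z) b = starRingEnd ℂ (φx z b) := (hconj z b hb).2
  have hcsC : (Complex.ofReal (c b)) * (Complex.ofReal (deriv s b))
      - (Complex.ofReal (deriv c b)) * (Complex.ofReal (s b)) = 1 := by
    push_cast
    exact_mod_cast congrArg Complex.ofReal hcs
  have hnum : E z * starRingEnd ℂ (E w)
      - E (starRingEnd ℂ w) * starRingEnd ℂ (E (starRingEnd ℂ z))
      = 2 * Complex.I * u b := by
    simp only [hE, hqb, hqb', hpb, hpb', hu, map_add, map_sub, map_mul,
      Complex.conj_ofReal, Complex.conj_I, Complex.conj_conj]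
    linear_combination (2 * Complex.I * (φx z b * starRingEnd ℂ (φ w b)
      - φ z b * starRingEnd ℂ (φx w b))) * hcsC
  rw [hnum]
  exact mul_div_mul_left _ _ (by simp [Complex.I_ne_zero] : (2 : ℂ) * Complex.I ≠ 0)
end

section
/- Let a < b be real numbers and q : [a,b] → ℝ. Let φ : ℂ × [a,b] → ℂ satisfy: (1) for each z ∈ ℂ, x ↦ φ(z,x) is twice differentiable with ∂²_xφ(z,x) = (q(x) − z)·φ(z,x); (2) φ(z̄, x) = conj(φ(z,x)) and ∂_xφ(z̄, x) = conj(∂_xφ(z,x)) for all z ∈ ℂ, x ∈ [a,b]; (3) the boundary values φ(z,a) and ∂_xφ(z,a) do not depend on z. Let c, s : [a,b] → ℝ be differentiable with c(b)s'(b) − c'(b)s(b) = 1, and define E(z) := (c(b)·∂_xφ(z,b) − c'(b)·φ(z,b)) + i·(s(b)·∂_xφ(z,b) − s'(b)·φ(z,b)). If z ∈ ℂ with Im z > 0 and the function x ↦ φ(z,x) is not identically zero on [a,b], then |E(z)| > |E(z̄)|. -/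
open Complex

lemma hb_normSq_key (C C' S S' : ℝ) (U V : ℂ) :
    Complex.normSq (((C : ℂ) * V - (C' : ℂ) * U) +
        Complex.I * ((S : ℂ) * V - (S' : ℂ) * U)) -
      Complex.normSq (((C : ℂ) * (starRingEnd ℂ V) - (C' : ℂ) * (starRingEnd ℂ U)) +
        Complex.I * ((S : ℂ) * (starRingEnd ℂ V) - (S' : ℂ) * (starRingEnd ℂ U))) =
    4 * (C * S' - C' * S) * ((starRingEnd ℂ V) * U).im := by
  simp [Complex.normSq_apply, Complex.mul_im, Complex.mul_re, Complex.add_re, Complex.add_im,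
    Complex.sub_re, Complex.sub_im]
  ring

/-- Hermite–Biehler property of `E(z) = W_b(c,φ(z)) + i W_b(s,φ(z))`
(with `W_b(u,v) := u(b) v'(b) − u'(b) v(b)`): if `Im z > 0` and `φ(z,·)` is not
identically zero on `[a,b]`, then `|E(z)| > |E(z̄)|`. -/
theorem de_branges_hermite_biehler
    (a b : ℝ) (hab : a < b) (q : ℝ → ℝ)
    (φ φx : ℂ → ℝ → ℂ)
    (hφode : ∀ z : ℂ, ∀ x ∈ Set.Icc a b, HasDerivAt (fun t => φ z t) (φx z x) x)
    (hφode' : ∀ z : ℂ, ∀ x ∈ Set.Icc a b,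
      HasDerivAt (fun t => φx z t) (((q x : ℂ) - z) * φ z x) x)
    (hconj : ∀ z : ℂ, ∀ x ∈ Set.Icc a b,
      φ (starRingEnd ℂ z) x = starRingEnd ℂ (φ z x) ∧
      φx (starRingEnd ℂ z) x = starRingEnd ℂ (φx z x))
    (hinit : ∀ z w : ℂ, φ z a = φ w a ∧ φx z a = φx w a)
    (c s : ℝ → ℝ)
    (hc : ∀ x ∈ Set.Icc a b, DifferentiableAt ℝ c x)
    (hs : ∀ x ∈ Set.Icc a b, DifferentiableAt ℝ s x)
    (hcs : c b * deriv s b - deriv c b * s b = 1)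
    (E : ℂ → ℂ)
    (hE : ∀ z : ℂ, E z = ((Complex.ofReal (c b)) * φx z b -
        (Complex.ofReal (deriv c b)) * φ z b) +
      Complex.I * ((Complex.ofReal (s b)) * φx z b -
        (Complex.ofReal (deriv s b)) * φ z b)) :
    ∀ z : ℂ, 0 < z.im → ¬ (∀ x ∈ Set.Icc a b, φ z x = 0) →
      ‖E (starRingEnd ℂ z)‖ < ‖E z‖ := by
  intro z hz hne
  -- the function g x = Im(conj(φx z x) * φ z x)
  set g : ℝ → ℝ := fun x => ((starRingEnd ℂ (φx z x)) * φ z x).im with hg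
  -- derivative of g
  have hgderiv : ∀ x ∈ Set.Icc a b,
      HasDerivAt g (z.im * Complex.normSq (φ z x)) x := by
    intro x hx
    have h1 : HasDerivAt (fun t => (starRingEnd ℂ (φx z t)) * φ z t)
        ((starRingEnd ℂ (((q x : ℂ) - z) * φ z x)) * φ z x +
          (starRingEnd ℂ (φx z x)) * φx z x) x := by
      exact ((hφode' z x hx).star).mul (hφode z x hx)
    have h2 := Complex.imCLM.hasFDerivAt.comp_hasDerivAt x h1
    have h3 : (Complex.imCLM ((starRingEnd ℂ (((q x : ℂ) - z) * φ z x)) * φ z x +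
        (starRingEnd ℂ (φx z x)) * φx z x)) = z.im * Complex.normSq (φ z x) := by
      simp only [Complex.imCLM_apply, Complex.add_im]
      have e1 : (starRingEnd ℂ (((q x : ℂ) - z) * φ z x)) * φ z x
          = (starRingEnd ℂ ((q x : ℂ) - z)) * (Complex.normSq (φ z x) : ℂ) := by
        rw [map_mul, mul_assoc, ← Complex.normSq_eq_conj_mul_self]
      have e2 : ((starRingEnd ℂ (φx z x)) * φx z x).im = 0 := by
        rw [← Complex.normSq_eq_conj_mul_self]; simp
      rw [e1, e2, add_zero]
      simp [Complex.mul_im]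
    rw [← h3]
    exact h2
  -- g a = 0
  have hga : g a = 0 := by
    have h1 := (hconj z a ⟨le_refl a, hab.le⟩).1
    have h2 := (hconj z a ⟨le_refl a, hab.le⟩).2
    have h3 := (hinit (starRingEnd ℂ z) z).1
    have h4 := (hinit (starRingEnd ℂ z) z).2
    have hU : starRingEnd ℂ (φ z a) = φ z a := by rw [← h1, h3]
    have hV : starRingEnd ℂ (φx z a) = φx z a := by rw [← h2, h4]
    have : starRingEnd ℂ ((starRingEnd ℂ (φx z a)) * φ z a)
        = (starRingEnd ℂ (φx z a)) * φ z a := by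
      simp [map_mul, hU, hV]
    have him := Complex.conj_eq_iff_im.mp this
    simpa [hg] using him
  -- continuity of φ z on the interval
  have hφcont : ContinuousOn (fun x => φ z x) (Set.Icc a b) := by
    intro x hx
    exact ((hφode z x hx).continuousAt).continuousWithinAt
  have hcontInt : ContinuousOn (fun x => z.im * Complex.normSq (φ z x)) (Set.Icc a b) :=
    continuousOn_const.mul (Complex.continuous_normSq.comp_continuousOn hφcont)
  -- FTC
  have hFTC : ∫ x in a..b, z.im * Complex.normSq (φ z x) = g b - g a := by
    apply intervalIntegral.integral_eq_sub_of_hasDerivAt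
    · intro x hx
      rw [Set.uIcc_of_le hab.le] at hx
      exact hgderiv x hx
    · apply ContinuousOn.intervalIntegrable
      rwa [Set.uIcc_of_le hab.le]
  -- positivity of the integral
  have hpos : 0 < ∫ x in a..b, z.im * Complex.normSq (φ z x) := by
    apply intervalIntegral.integral_pos hab hcontInt
    · intro x hx
      exact mul_nonneg hz.le (Complex.normSq_nonneg _)
    · push_neg at hne
      obtain ⟨x₀, hx₀, hφ₀⟩ := hne
      exact ⟨x₀, hx₀, mul_pos hz (by simpa [Complex.normSq_pos] using hφ₀)⟩
  have hgb : 0 < g b := by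
    rw [hFTC, hga, sub_zero] at hpos
    exact hpos
  -- key identity for normSq difference
  have hb' : b ∈ Set.Icc a b := ⟨hab.le, le_refl b⟩
  have hEb : E (starRingEnd ℂ z)
      = ((Complex.ofReal (c b)) * (starRingEnd ℂ (φx z b)) - (Complex.ofReal (deriv c b)) * (starRingEnd ℂ (φ z b))) +
        Complex.I * ((Complex.ofReal (s b)) * (starRingEnd ℂ (φx z b)) -
          (Complex.ofReal (deriv s b)) * (starRingEnd ℂ (φ z b))) := by
    rw [hE (starRingEnd ℂ z), (hconj z b hb').1, (hconj z b hb').2]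
  have hdiff : Complex.normSq (E z) - Complex.normSq (E (starRingEnd ℂ z)) = 4 * g b := by
    rw [hE z, hEb]
    have := hb_normSq_key (c b) (deriv c b) (s b) (deriv s b) (φ z b) (φx z b)
    rw [this, hcs]
    simp [hg]
  have hlt : Complex.normSq (E (starRingEnd ℂ z)) < Complex.normSq (E z) := by
    nlinarith [hgb, hdiff]
  calc ‖E (starRingEnd ℂ z)‖ = Real.sqrt (Complex.normSq (E (starRingEnd ℂ z))) := rfl
    _ < Real.sqrt (Complex.normSq (E z)) :=
        Real.sqrt_lt_sqrt (Complex.normSq_nonneg _) hlt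
    _ = ‖E z‖ := rfl
end
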